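/- arXiv:1511.04503 — 2 statements merged into one kernel-verified Lean document; each statement's English description precedes it below -/
import Mathlib

section
/- Let (Z,d,ν) be a metric measure space in which ν is a doubling Radon measure, let θ ∈ [0,1] and τ ≥ 1, and fix the parameter R > 0 in both norms. Then there is a constant C ≥ 1, depending on the doubling constant, θ and τ, such that ‖u‖_{A^θ_{1,τ}(Z)} ≤ C ‖u‖_{B^θ_{1,1}(Z)} for every u ∈ L¹(Z,ν) (with the Besov norm taken with parameter 2R). -/
open MeasureTheory Metric Set ENNReal

/-- The Besov energy `∫_0^R ∫_Z ⨍_{B(x,t)} |f(y) − f(x)| dν(y) dν(x) dt/t^{1+θ}`. -/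
noncomputable def besovEnergy {Z : Type*} [MetricSpace Z] [MeasurableSpace Z]
    (ν : Measure Z) (f : Z → ℝ) (θ R : ℝ) : ℝ≥0∞ :=
  ∫⁻ t in Set.Ioo (0 : ℝ) R,
    (∫⁻ x, (ν (ball x t))⁻¹ * ∫⁻ y in ball x t, ENNReal.ofReal |f y - f x| ∂ν ∂ν) *
      ENNReal.ofReal (t ^ (-(1 + θ)))

/-- The Besov norm `‖f‖_{B^θ_{1,1}}` with parameter `R`. -/
noncomputable def besovNorm {Z : Type*} [MetricSpace Z] [MeasurableSpace Z]
    (ν : Measure Z) (f : Z → ℝ) (θ R : ℝ) : ℝ≥0∞ :=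
  (∫⁻ z, ENNReal.ofReal |f z| ∂ν) + besovEnergy ν f θ R

/-- A collection of balls (recorded as center-radius pairs) is admissible for the
fractional John–Nirenberg norm with dilation `τ` and parameter `R` if it is countable,
radii are positive and at most `R/τ`, and the `τ`-inflated balls are pairwise disjoint. -/
def jnAdmissible {Z : Type*} [MetricSpace Z] (τ R : ℝ) (𝓑 : Set (Z × ℝ)) : Prop :=
  𝓑.Countable ∧ (∀ b ∈ 𝓑, 0 < b.2 ∧ b.2 ≤ R / τ) ∧
    𝓑.Pairwise fun b₁ b₂ => Disjoint (ball b₁.1 (τ * b₁.2)) (ball b₂.1 (τ * b₂.2))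

/-- The fractional John–Nirenberg norm `‖u‖_{A^θ_{1,τ}}` with parameter `R`. -/
noncomputable def jnNorm {Z : Type*} [MetricSpace Z] [MeasurableSpace Z]
    (ν : Measure Z) (u : Z → ℝ) (θ τ R : ℝ) : ℝ≥0∞ :=
  (∫⁻ z, ENNReal.ofReal |u z| ∂ν) +
    ⨆ (𝓑 : Set (Z × ℝ)) (_ : jnAdmissible τ R 𝓑),
      ∑' b : 𝓑, ENNReal.ofReal ((b : Z × ℝ).2 ^ (-θ)) *
        ∫⁻ y in ball (b : Z × ℝ).1 (τ * (b : Z × ℝ).2),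
          ENNReal.ofReal |u y - ⨍ w in ball (b : Z × ℝ).1 (τ * (b : Z × ℝ).2), u w ∂ν| ∂ν

-- helper 1: finset superadditivity of lintegral (no measurability)
lemma aux_lintegral_finset_sum_le {α : Type*} [MeasurableSpace α] (μ : Measure α)
    {ι : Type*} [DecidableEq ι] (F : Finset ι) (f : ι → α → ℝ≥0∞) :
    ∑ b ∈ F, ∫⁻ a, f b a ∂μ ≤ ∫⁻ a, ∑ b ∈ F, f b a ∂μ := by
  induction F using Finset.induction with
  | empty => simp
  | insert a F h ih =>
    rw [Finset.sum_insert h]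
    refine le_trans (add_le_add le_rfl ih) ?_
    refine le_trans (le_lintegral_add _ _) (lintegral_mono fun x => ?_)
    rw [Finset.sum_insert h]

-- helper 2: sum of indicators over pairwise disjoint sets
lemma aux_sum_indicator_le {α ι : Type*} [DecidableEq ι] (F : Finset ι) (S : ι → Set α)
    (hdisj : (↑F : Set ι).Pairwise (Function.onFun Disjoint S)) (f : α → ℝ≥0∞) (x : α) :
    ∑ b ∈ F, (S b).indicator f x ≤ f x := by
  induction F using Finset.induction with
  | empty => simp
  | insert a F h ih =>
    rw [Finset.sum_insert h]
    by_cases hx : x ∈ S a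
    · have h0 : ∀ b ∈ F, (S b).indicator f x = 0 := by
        intro b hb
        have hne : a ≠ b := fun he => h (he ▸ hb)
        have hd : Disjoint (S a) (S b) :=
          hdisj (by simp) (by simp [hb]) hne
        have : x ∉ S b := fun hxb => (Set.disjoint_left.mp hd hx) hxb
        simp [Set.indicator_of_notMem this]
      rw [Finset.sum_eq_zero h0, add_zero, Set.indicator_of_mem hx]
    · rw [Set.indicator_of_notMem hx, zero_add]
      exact ih (hdisj.mono (by simp [Set.subset_insert]))

-- helper 3
lemma aux_sum_setLIntegral_le {α ι : Type*} [MeasurableSpace α] (μ : Measure α) [DecidableEq ι]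
    (F : Finset ι) (S : ι → Set α) (hS : ∀ b, MeasurableSet (S b))
    (hdisj : (↑F : Set ι).Pairwise (Function.onFun Disjoint S)) (f : α → ℝ≥0∞) :
    ∑ b ∈ F, ∫⁻ a in S b, f a ∂μ ≤ ∫⁻ a, f a ∂μ := by
  have : ∀ b, ∫⁻ a in S b, f a ∂μ = ∫⁻ a, (S b).indicator f a ∂μ := fun b =>
    (lintegral_indicator (hS b) f).symm
  simp_rw [this]
  refine le_trans (aux_lintegral_finset_sum_le μ F _) (lintegral_mono fun x => ?_)
  exact aux_sum_indicator_le F S hdisj f x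


lemma aux_real_const {τ θ r : ℝ} (hτ : 1 ≤ τ) (hθ0 : 0 ≤ θ) (hθ1 : θ ≤ 1) (hr : 0 < r) :
    r ^ (-θ) ≤ 8 * τ * ((2 * (τ * r)) ^ (-(1 + θ)) * (τ * r / 2)) := by
  have hτ0 : (0:ℝ) < τ := lt_of_lt_of_le one_pos hτ
  set s := τ * r with hs
  have hs0 : 0 < s := mul_pos hτ0 hr
  have h2s : (2 * s) ^ (-(1+θ)) = 2 ^ (-(1+θ)) * s ^ (-(1+θ)) :=
    Real.mul_rpow (by norm_num) hs0.le
  have hss : s ^ (-(1+θ)) * s = s ^ (-θ) := by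
    nth_rewrite 2 [← Real.rpow_one s]
    rw [← Real.rpow_add hs0]; ring_nf
  have hRHS : 8 * τ * ((2 * s) ^ (-(1+θ)) * (s / 2)) = τ * (2 ^ (1-θ) * s ^ (-θ)) := by
    rw [h2s, ← hss]
    have h4 : (4:ℝ) * 2 ^ (-(1+θ)) = 2 ^ (1-θ) := by
      have : (4:ℝ) = 2 ^ (2:ℝ) := by
        rw [show (2:ℝ) = ((2:ℕ):ℝ) from by norm_num, Real.rpow_natCast]; norm_num
      rw [this, ← Real.rpow_add two_pos]; ring_nf
    calc 8 * τ * (2 ^ (-(1+θ)) * s ^ (-(1+θ)) * (s / 2))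
        = τ * ((4 * 2 ^ (-(1+θ))) * (s ^ (-(1+θ)) * s)) := by ring
      _ = τ * (2 ^ (1-θ) * (s ^ (-(1+θ)) * s)) := by rw [h4]
  rw [hRHS]
  have hr' : r ^ (-θ) = s ^ (-θ) * τ ^ θ := by
    have hrs : r = s / τ := by field_simp [hs]; rw [hs]; ring
    rw [hrs, Real.div_rpow hs0.le hτ0.le, Real.rpow_neg hτ0.le]; field_simp
  rw [hr']
  have h1 : τ ^ θ ≤ τ := by
    nth_rewrite 2 [← Real.rpow_one τ]
    exact Real.rpow_le_rpow_of_exponent_le hτ hθ1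
  have h2 : (1:ℝ) ≤ 2 ^ (1-θ) := Real.one_le_rpow one_le_two (by linarith)
  have hsp : 0 ≤ s ^ (-θ) := Real.rpow_nonneg hs0.le _
  have hτp : 0 ≤ τ ^ θ := Real.rpow_nonneg hτ0.le _
  nlinarith [mul_le_mul_of_nonneg_left h1 hsp, mul_le_mul_of_nonneg_left h2 (mul_nonneg hsp (le_trans hτp h1))]

lemma aux_avg {Z : Type*} [MeasurableSpace Z] (ν : Measure Z)
    (u : Z → ℝ) (hu : Integrable u ν) (B : Set Z)
    (h0 : 0 < ν B) (hfin : ν B < ⊤) (x : Z) :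
    ENNReal.ofReal |u x - ⨍ w in B, u w ∂ν| * ν B ≤
      ∫⁻ y in B, ENNReal.ofReal |u y - u x| ∂ν := by
  set m := (ν B).toReal with hmdef
  have hm : 0 < m := ENNReal.toReal_pos h0.ne' hfin.ne
  have hInt : IntegrableOn u B ν := hu.integrableOn
  have hconst : IntegrableOn (fun _ => u x) B ν := integrableOn_const hfin.ne
  have ha : ⨍ w in B, u w ∂ν = m⁻¹ * ∫ w in B, u w ∂ν := by
    rw [setAverage_eq]; simp [hmdef, smul_eq_mul]; exact Or.inl rfl
  have hdiff : u x - ⨍ w in B, u w ∂ν = m⁻¹ * ∫ y in B, (u x - u y) ∂ν := by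
    rw [integral_sub hconst hInt, setIntegral_const, smul_eq_mul, ha]
    show u x - m⁻¹ * ∫ w in B, u w ∂ν = m⁻¹ * (m * u x - ∫ w in B, u w ∂ν)
    field_simp
  have habs : |u x - ⨍ w in B, u w ∂ν| ≤ m⁻¹ * ∫ y in B, |u x - u y| ∂ν := by
    rw [hdiff, abs_mul, abs_of_nonneg (inv_nonneg.2 hm.le)]
    refine mul_le_mul_of_nonneg_left ?_ (inv_nonneg.2 hm.le)
    simpa [Real.norm_eq_abs] using
      norm_integral_le_integral_norm (μ := ν.restrict B) (f := fun y => u x - u y)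
  have hofReal : ENNReal.ofReal (∫ y in B, |u x - u y| ∂ν) =
      ∫⁻ y in B, ENNReal.ofReal |u x - u y| ∂ν :=
    ofReal_integral_eq_lintegral_ofReal (hconst.sub hInt).abs
      (Filter.Eventually.of_forall fun _ => abs_nonneg _)
  have hI0 : 0 ≤ ∫ y in B, |u x - u y| ∂ν := integral_nonneg fun _ => abs_nonneg _
  have hkey : |u x - ⨍ w in B, u w ∂ν| * m ≤ ∫ y in B, |u x - u y| ∂ν := by
    calc |u x - ⨍ w in B, u w ∂ν| * m ≤ (m⁻¹ * ∫ y in B, |u x - u y| ∂ν) * m :=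
          mul_le_mul_of_nonneg_right habs hm.le
      _ = ∫ y in B, |u x - u y| ∂ν := by field_simp
  calc ENNReal.ofReal |u x - ⨍ w in B, u w ∂ν| * ν B
      = ENNReal.ofReal (|u x - ⨍ w in B, u w ∂ν| * m) := by
        rw [ENNReal.ofReal_mul (abs_nonneg _), ENNReal.ofReal_toReal hfin.ne]
    _ ≤ ENNReal.ofReal (∫ y in B, |u x - u y| ∂ν) := ENNReal.ofReal_le_ofReal hkey
    _ = ∫⁻ y in B, ENNReal.ofReal |u x - u y| ∂ν := hofReal
    _ = ∫⁻ y in B, ENNReal.ofReal |u y - u x| ∂ν := by simp_rw [abs_sub_comm]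

lemma aux_const_le_setLIntegral {α : Type*} [MeasurableSpace α] (μ : Measure α) {s : Set α}
    (hs : MeasurableSet s) {c : ℝ≥0∞} {f : α → ℝ≥0∞} (h : ∀ x ∈ s, c ≤ f x) :
    c * μ s ≤ ∫⁻ x in s, f x ∂μ := by
  rw [← setLIntegral_const s c, ← lintegral_indicator hs, ← lintegral_indicator hs]
  refine lintegral_mono fun x => ?_
  by_cases hx : x ∈ s <;> simp [hx, h x]

lemma aux_per_ball {Z : Type*} [MetricSpace Z] [MeasurableSpace Z] [BorelSpace Z]
    (ν : Measure Z) (C_D : ℝ) (hCD : 1 ≤ C_D)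
    (hdbl : ∀ (z : Z) (r : ℝ), 0 < r →
      ν (ball z (2 * r)) ≤ ENNReal.ofReal C_D * ν (ball z r) ∧
        0 < ν (ball z r) ∧ ν (ball z r) < ⊤)
    (θ τ : ℝ) (hθ0 : 0 ≤ θ) (hθ1 : θ ≤ 1) (hτ : 1 ≤ τ)
    (u : Z → ℝ) (hu : Integrable u ν) (x0 : Z) (r : ℝ) (hr : 0 < r) :
    ENNReal.ofReal (r ^ (-θ)) *
      ∫⁻ y in ball x0 (τ * r), ENNReal.ofReal |u y - ⨍ w in ball x0 (τ * r), u w ∂ν| ∂ν ≤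
    (ENNReal.ofReal (8 * τ) * 2 * (ENNReal.ofReal C_D) ^ 3) *
      ∫⁻ t in Ioo (3 * (τ * r) / 2) (2 * (τ * r)),
        (∫⁻ x in ball x0 (τ * r / 2),
          (ν (ball x t))⁻¹ * ∫⁻ y in ball x t, ENNReal.ofReal |u y - u x| ∂ν ∂ν) *
        ENNReal.ofReal (t ^ (-(1 + θ))) ∂volume := by
  have hτ0 : (0:ℝ) < τ := lt_of_lt_of_le one_pos hτ
  set s := τ * r with hsdef
  have hs0 : 0 < s := mul_pos hτ0 hr
  set B' : Set Z := ball x0 s with hB'def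
  set H : Set Z := ball x0 (s / 2) with hHdef
  set D : ℝ≥0∞ := ENNReal.ofReal C_D with hDdef
  set a : ℝ := ⨍ w in B', u w ∂ν with hadef
  set Osc : ℝ≥0∞ := ∫⁻ y in B', ENNReal.ofReal |u y - a| ∂ν with hOscdef
  set φ : Z → ℝ≥0∞ := fun x => ∫⁻ y in B', ENNReal.ofReal |u y - u x| ∂ν with hφdef
  have hD1 : 1 ≤ D := by
    rw [hDdef, ← ENNReal.ofReal_one]; exact ENNReal.ofReal_le_ofReal hCD
  have hD0 : D ≠ 0 := fun h => by simp [h] at hD1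
  have hDtop : D ≠ ⊤ := ENNReal.ofReal_ne_top
  obtain ⟨-, hB'0, hB'fin⟩ := hdbl x0 s hs0
  obtain ⟨hHdb, hH0, hHfin⟩ := hdbl x0 (s/2) (by linarith)
  have hB'H : ν B' ≤ D * ν H := by
    have : ball x0 (2 * (s/2)) = B' := by rw [hB'def]; congr 1; ring
    rw [← this]; exact hHdb
  -- step 1 : Osc ≤ 2 * φ x for every x
  have h1 : ∀ x : Z, Osc ≤ 2 * φ x := by
    intro x
    have hmono : Osc ≤ ∫⁻ y in B',
        (ENNReal.ofReal |u y - u x| + ENNReal.ofReal |u x - a|) ∂ν := by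
      refine lintegral_mono fun y => ?_
      refine le_trans (ENNReal.ofReal_le_ofReal ?_) (ENNReal.ofReal_add_le)
      exact (abs_sub_le _ _ _)
    have hadd : ∫⁻ y in B',
        (ENNReal.ofReal |u y - u x| + ENNReal.ofReal |u x - a|) ∂ν
        = φ x + ENNReal.ofReal |u x - a| * ν B' := by
      rw [lintegral_add_right _ measurable_const, setLIntegral_const]
    calc Osc ≤ φ x + ENNReal.ofReal |u x - a| * ν B' := hadd ▸ hmono
      _ ≤ φ x + φ x := add_le_add le_rfl (aux_avg ν u hu B' hB'0 hB'fin x)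
      _ = 2 * φ x := (two_mul _).symm
  -- step 2 : pointwise lower bound on g
  set c0 : ℝ≥0∞ := (D ^ 2 * ν B')⁻¹ * (2⁻¹ * Osc) with hc0def
  have h2 : ∀ t ∈ Ioo (3 * s / 2) (2 * s), ∀ x ∈ H,
      c0 ≤ (ν (ball x t))⁻¹ * ∫⁻ y in ball x t, ENNReal.ofReal |u y - u x| ∂ν := by
    rintro t ⟨ht1, ht2⟩ x hx
    have hxd : dist x x0 < s / 2 := mem_ball.mp hx
    have hsub : B' ⊆ ball x t := by
      intro y hy
      have : dist y x0 < s := mem_ball.mp hy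
      have : dist y x < 3 * s / 2 := by
        calc dist y x ≤ dist y x0 + dist x0 x := dist_triangle _ _ _
          _ < s + s / 2 := by rw [dist_comm x0 x]; linarith
          _ = 3 * s / 2 := by ring
      exact mem_ball.mpr (lt_of_lt_of_le this ht1.le)
    have hsup : ball x t ⊆ ball x0 (2 * (2 * s)) := by
      intro y hy
      have : dist y x < t := mem_ball.mp hy
      refine mem_ball.mpr ?_
      calc dist y x0 ≤ dist y x + dist x x0 := dist_triangle _ _ _
        _ < t + s / 2 := by linarith
        _ ≤ 2 * (2 * s) := by linarith
    have hmeas : ν (ball x t) ≤ D ^ 2 * ν B' := by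
      calc ν (ball x t) ≤ ν (ball x0 (2 * (2 * s))) := measure_mono hsup
        _ ≤ D * ν (ball x0 (2 * s)) := (hdbl x0 (2 * s) (by linarith)).1
        _ ≤ D * (D * ν B') := mul_le_mul_right (hdbl x0 s hs0).1 _
        _ = D ^ 2 * ν B' := by ring
    have hinv : (D ^ 2 * ν B')⁻¹ ≤ (ν (ball x t))⁻¹ := ENNReal.inv_le_inv' hmeas
    have hφle : 2⁻¹ * Osc ≤ φ x := by
      have := h1 x
      calc 2⁻¹ * Osc ≤ 2⁻¹ * (2 * φ x) := mul_le_mul_right (h1 x) _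
        _ = (2⁻¹ * 2) * φ x := by ring
        _ = φ x := by rw [ENNReal.inv_mul_cancel two_ne_zero ENNReal.ofNat_ne_top, one_mul]
    have hφball : φ x ≤ ∫⁻ y in ball x t, ENNReal.ofReal |u y - u x| ∂ν :=
      lintegral_mono_set hsub
    exact mul_le_mul' hinv (le_trans hφle hφball)
  -- step 3 : integrate over H
  have h3 : ∀ t ∈ Ioo (3 * s / 2) (2 * s), c0 * ν H ≤
      ∫⁻ x in H, (ν (ball x t))⁻¹ * ∫⁻ y in ball x t, ENNReal.ofReal |u y - u x| ∂ν ∂ν :=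
    fun t ht => aux_const_le_setLIntegral ν measurableSet_ball (h2 t ht)
  -- step 4 : integrate over t
  set w0 : ℝ≥0∞ := ENNReal.ofReal ((2 * s) ^ (-(1 + θ))) with hw0def
  have h4 : (c0 * ν H * w0) * ENNReal.ofReal (s / 2) ≤
      ∫⁻ t in Ioo (3 * s / 2) (2 * s),
        (∫⁻ x in H, (ν (ball x t))⁻¹ * ∫⁻ y in ball x t, ENNReal.ofReal |u y - u x| ∂ν ∂ν) *
        ENNReal.ofReal (t ^ (-(1 + θ))) ∂volume := by
    have hvol : (volume (Ioo (3 * s / 2) (2 * s)) : ℝ≥0∞) = ENNReal.ofReal (s / 2) := by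
      rw [Real.volume_Ioo]; congr 1; ring
    rw [← hvol]
    refine aux_const_le_setLIntegral volume measurableSet_Ioo ?_
    rintro t ⟨ht1, ht2⟩
    refine mul_le_mul' (h3 t ⟨ht1, ht2⟩) (ENNReal.ofReal_le_ofReal ?_)
    have ht0 : 0 < t := lt_trans (by linarith) ht1
    exact Real.rpow_le_rpow_of_nonpos ht0 ht2.le (by linarith)
  -- final arithmetic
  refine le_trans ?_ (mul_le_mul_right h4 _)
  have hone : (1:ℝ≥0∞) ≤ D * ((ν B')⁻¹ * ν H) := by
    have hmulne0 : D * ν H ≠ 0 := by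
      exact mul_ne_zero hD0 hH0.ne'
    have hmulnetop : D * ν H ≠ ⊤ := ENNReal.mul_ne_top hDtop hHfin.ne
    calc (1:ℝ≥0∞) = (D * ν H) * (D * ν H)⁻¹ :=
          (ENNReal.mul_inv_cancel hmulne0 hmulnetop).symm
      _ ≤ (D * ν H) * (ν B')⁻¹ := mul_le_mul_right (ENNReal.inv_le_inv' hB'H) _
      _ = D * ((ν B')⁻¹ * ν H) := by ring
  have hsplit : (D ^ 2 * ν B')⁻¹ = (D ^ 2)⁻¹ * (ν B')⁻¹ :=
    ENNReal.mul_inv (Or.inl (pow_ne_zero 2 hD0)) (Or.inl (ENNReal.pow_ne_top hDtop))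
  have hDD : D ^ 3 * (D ^ 2)⁻¹ = D := by
    have : (D:ℝ≥0∞) ^ 3 = D ^ 2 * D := by ring
    rw [this, mul_comm (D ^ 2) D, mul_assoc,
      ENNReal.mul_inv_cancel (pow_ne_zero 2 hD0) (ENNReal.pow_ne_top hDtop), mul_one]
  have h22 : (2:ℝ≥0∞) * 2⁻¹ = 1 := ENNReal.mul_inv_cancel two_ne_zero ENNReal.ofNat_ne_top
  have hLHS : ENNReal.ofReal (r ^ (-θ)) ≤
      ENNReal.ofReal (8 * τ) * w0 * ENNReal.ofReal (s / 2) := by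
    rw [hw0def, ← ENNReal.ofReal_mul (by positivity), ← ENNReal.ofReal_mul (by positivity)]
    refine ENNReal.ofReal_le_ofReal ?_
    have := aux_real_const hτ hθ0 hθ1 hr
    calc r ^ (-θ) ≤ 8 * τ * ((2 * (τ * r)) ^ (-(1 + θ)) * (τ * r / 2)) := this
      _ = 8 * τ * (2 * s) ^ (-(1 + θ)) * (s / 2) := by rw [← hsdef]; ring
  calc ENNReal.ofReal (r ^ (-θ)) * Osc
      ≤ (ENNReal.ofReal (8 * τ) * w0 * ENNReal.ofReal (s / 2)) * (1 * Osc) :=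
        by rw [one_mul]; exact mul_le_mul_left hLHS _
    _ ≤ (ENNReal.ofReal (8 * τ) * w0 * ENNReal.ofReal (s / 2)) *
        ((D * ((ν B')⁻¹ * ν H)) * Osc) :=
        mul_le_mul_right (mul_le_mul_left hone _) _
    _ = (ENNReal.ofReal (8 * τ) * 2 * D ^ 3) * ((c0 * ν H * w0) * ENNReal.ofReal (s / 2)) := by
        rw [hc0def, hsplit]
        calc ENNReal.ofReal (8 * τ) * w0 * ENNReal.ofReal (s / 2) * (D * ((ν B')⁻¹ * ν H) * Osc)
            = ENNReal.ofReal (8 * τ) * w0 * ENNReal.ofReal (s / 2) *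
              ((2 * 2⁻¹) * ((D ^ 3 * (D ^ 2)⁻¹) * ((ν B')⁻¹ * ν H)) * Osc) := by
              rw [h22, hDD]; ring
          _ = ENNReal.ofReal (8 * τ) * 2 * D ^ 3 *
              ((D ^ 2)⁻¹ * (ν B')⁻¹ * (2⁻¹ * Osc) * ν H * w0 * ENNReal.ofReal (s / 2)) := by
              ring

/-- For `θ ∈ [0,1]`, `τ ≥ 1` and parameter `R > 0`, there is `C ≥ 1`
(depending on the doubling constant, `θ` and `τ`) such that
`‖u‖_{A^θ_{1,τ}(Z)} ≤ C ‖u‖_{B^θ_{1,1}(Z)}` for every `u ∈ L¹(Z,ν)`,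
the Besov norm being taken with parameter `2R`. -/
theorem stmt_6
    {Z : Type*} [MetricSpace Z] [MeasurableSpace Z] [BorelSpace Z]
    (ν : Measure Z) [ν.Regular]
    (C_D : ℝ) (hCD : 1 ≤ C_D)
    (hdbl : ∀ (z : Z) (r : ℝ), 0 < r →
      ν (ball z (2 * r)) ≤ ENNReal.ofReal C_D * ν (ball z r) ∧
        0 < ν (ball z r) ∧ ν (ball z r) < ⊤)
    (θ : ℝ) (hθ0 : 0 ≤ θ) (hθ1 : θ ≤ 1)
    (τ : ℝ) (hτ : 1 ≤ τ) (R : ℝ) (hR : 0 < R) :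
    ∃ C : ℝ≥0∞, 1 ≤ C ∧ C < ⊤ ∧ ∀ u : Z → ℝ, Integrable u ν →
      jnNorm ν u θ τ R ≤ C * besovNorm ν u θ (2 * R) := by
  classical
  have hτ0 : (0:ℝ) < τ := lt_of_lt_of_le one_pos hτ
  set D : ℝ≥0∞ := ENNReal.ofReal C_D with hDdef
  have hD1 : 1 ≤ D := by
    rw [hDdef, ← ENNReal.ofReal_one]; exact ENNReal.ofReal_le_ofReal hCD
  set K : ℝ≥0∞ := ENNReal.ofReal (8 * τ) * 2 * D ^ 3 with hKdef
  have hK1 : 1 ≤ K := by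
    have h8 : (1:ℝ≥0∞) ≤ ENNReal.ofReal (8 * τ) := by
      rw [← ENNReal.ofReal_one]; exact ENNReal.ofReal_le_ofReal (by nlinarith)
    calc (1:ℝ≥0∞) = 1 * 1 * 1 := by norm_num
      _ ≤ ENNReal.ofReal (8 * τ) * 2 * D ^ 3 := by
        gcongr
        · exact one_le_two
        · exact one_le_pow_of_one_le' hD1 3
  have hKtop : K < ⊤ := by
    rw [hKdef, lt_top_iff_ne_top]
    exact ENNReal.mul_ne_top (ENNReal.mul_ne_top ENNReal.ofReal_ne_top ENNReal.ofNat_ne_top)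
      (ENNReal.pow_ne_top ENNReal.ofReal_ne_top)
  refine ⟨K, hK1, hKtop, fun u hu => ?_⟩
  -- abbreviations
  set g : ℝ → Z → ℝ≥0∞ := fun t x =>
    (ν (ball x t))⁻¹ * ∫⁻ y in ball x t, ENNReal.ofReal |u y - u x| ∂ν with hgdef
  set w : ℝ → ℝ≥0∞ := fun t => ENNReal.ofReal (t ^ (-(1 + θ))) with hwdef
  have hE : besovEnergy ν u θ (2 * R) =
      ∫⁻ t in Ioo (0:ℝ) (2 * R), (∫⁻ x, g t x ∂ν) * w t ∂volume := rfl
  -- the key estimate for the supremum part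
  have hsup : (⨆ (𝓑 : Set (Z × ℝ)) (_ : jnAdmissible τ R 𝓑),
      ∑' b : 𝓑, ENNReal.ofReal ((b : Z × ℝ).2 ^ (-θ)) *
        ∫⁻ y in ball (b : Z × ℝ).1 (τ * (b : Z × ℝ).2),
          ENNReal.ofReal |u y - ⨍ w in ball (b : Z × ℝ).1 (τ * (b : Z × ℝ).2), u w ∂ν| ∂ν)
      ≤ K * besovEnergy ν u θ (2 * R) := by
    refine iSup₂_le fun 𝓑 hadm => ?_
    obtain ⟨hcnt, hrad, hdisj⟩ := hadm
    rw [ENNReal.tsum_eq_iSup_sum]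
    refine iSup_le fun F => ?_
    -- per-ball bound
    have hper : ∀ b : 𝓑, ENNReal.ofReal ((b : Z × ℝ).2 ^ (-θ)) *
        (∫⁻ y in ball (b : Z × ℝ).1 (τ * (b : Z × ℝ).2),
          ENNReal.ofReal |u y - ⨍ w in ball (b : Z × ℝ).1 (τ * (b : Z × ℝ).2), u w ∂ν| ∂ν) ≤
        K * ∫⁻ t in Ioo (3 * (τ * (b : Z × ℝ).2) / 2) (2 * (τ * (b : Z × ℝ).2)),
          (∫⁻ x in ball (b : Z × ℝ).1 (τ * (b : Z × ℝ).2 / 2), g t x ∂ν) * w t ∂volume :=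
      fun b => aux_per_ball ν C_D hCD hdbl θ τ hθ0 hθ1 hτ u hu
        (b : Z × ℝ).1 (b : Z × ℝ).2 (hrad _ b.2).1
    refine le_trans (Finset.sum_le_sum fun b _ => hper b) ?_
    rw [← Finset.mul_sum]
    refine mul_le_mul_right ?_ K
    -- now: sum over F of the t-integrals is at most the Besov energy
    rw [hE]
    set I : 𝓑 → Set ℝ := fun b => Ioo (3 * (τ * (b : Z × ℝ).2) / 2) (2 * (τ * (b : Z × ℝ).2))
      with hIdef
    set ψ : 𝓑 → ℝ → ℝ≥0∞ := fun b t =>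
      (∫⁻ x in ball (b : Z × ℝ).1 (τ * (b : Z × ℝ).2 / 2), g t x ∂ν) * w t with hψdef
    have hIsub : ∀ b : 𝓑, I b ⊆ Ioo (0:ℝ) (2 * R) := by
      intro b t ht
      obtain ⟨h1, h2⟩ := ht
      have hb0 : 0 < (b : Z × ℝ).2 := (hrad _ b.2).1
      have hbR : τ * (b : Z × ℝ).2 ≤ R := by
        have := (hrad _ b.2).2
        rw [le_div_iff₀ hτ0] at this; linarith
      constructor
      · have : 0 < τ * (b : Z × ℝ).2 := mul_pos hτ0 hb0
        linarith
      · linarith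
    have hstep1 : ∀ b : 𝓑, (∫⁻ t in I b, ψ b t ∂volume) =
        ∫⁻ t in Ioo (0:ℝ) (2 * R), (I b).indicator (ψ b) t ∂volume := by
      intro b
      rw [lintegral_indicator measurableSet_Ioo,
        Measure.restrict_restrict measurableSet_Ioo,
        inter_eq_self_of_subset_left (hIsub b)]
    calc ∑ b ∈ F, ∫⁻ t in I b, ψ b t ∂volume
        = ∑ b ∈ F, ∫⁻ t in Ioo (0:ℝ) (2 * R), (I b).indicator (ψ b) t ∂volume := by
          exact Finset.sum_congr rfl fun b _ => hstep1 b
      _ ≤ ∫⁻ t in Ioo (0:ℝ) (2 * R), ∑ b ∈ F, (I b).indicator (ψ b) t ∂volume :=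
          aux_lintegral_finset_sum_le _ F _
      _ ≤ ∫⁻ t in Ioo (0:ℝ) (2 * R), (∫⁻ x, g t x ∂ν) * w t ∂volume := by
          refine lintegral_mono fun t => ?_
          calc ∑ b ∈ F, (I b).indicator (ψ b) t ≤ ∑ b ∈ F, ψ b t :=
                Finset.sum_le_sum fun b _ => Set.indicator_le_self _ _ t
            _ = (∑ b ∈ F, ∫⁻ x in ball (b : Z × ℝ).1 (τ * (b : Z × ℝ).2 / 2), g t x ∂ν) * w t :=
                by rw [Finset.sum_mul]
            _ ≤ (∫⁻ x, g t x ∂ν) * w t := by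
                refine mul_le_mul_left ?_ (w t)
                refine aux_sum_setLIntegral_le ν F
                  (fun b => ball (b : Z × ℝ).1 (τ * (b : Z × ℝ).2 / 2))
                  (fun b => measurableSet_ball) ?_ (g t)
                intro b₁ _ b₂ _ hne
                have hne' : (b₁ : Z × ℝ) ≠ (b₂ : Z × ℝ) := Subtype.coe_injective.ne hne
                have hd := hdisj b₁.2 b₂.2 hne'
                have hb1 : 0 < τ * (b₁ : Z × ℝ).2 := mul_pos hτ0 (hrad _ b₁.2).1
                have hb2 : 0 < τ * (b₂ : Z × ℝ).2 := mul_pos hτ0 (hrad _ b₂.2).1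
                exact hd.mono (ball_subset_ball (by linarith))
                  (ball_subset_ball (by linarith))
  -- conclude
  rw [jnNorm, besovNorm, mul_add]
  refine add_le_add ?_ hsup
  exact le_mul_of_one_le_left (by simp) hK1
end

section
/- Let (Z,d,ν) be a bounded metric measure space in which ν is a doubling Radon measure, let 0 ≤ θ < η ≤ 1 and τ ≥ 1, and fix the norm parameters. Then A^η_{1,τ}(Z) ⊂ B^θ_{1,1}(Z); quantitatively, there is a constant C ≥ 1 (depending on the doubling constant, θ, η, τ, diam(Z) and the norm parameters) such that ‖f‖_{B^θ_{1,1}(Z)} ≤ C ‖f‖_{A^η_{1,τ}(Z)} for every f ∈ L¹(Z,ν). -/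
open MeasureTheory Metric Set ENNReal

section StmtSevenAux

lemma ennreal_inv_mul_cancel_le (a c : ℝ≥0∞) : a⁻¹ * (c * a) ≤ c := by
  calc a⁻¹ * (c * a) = a⁻¹ * a * c := by ring
    _ ≤ 1 * c := mul_le_mul_left (ENNReal.inv_mul_le_one a) c
    _ = c := one_mul c

lemma ennreal_inv_le_of_le_mul {a b C : ℝ≥0∞} (hC0 : C ≠ 0) (hCt : C ≠ ⊤)
    (h : a ≤ C * b) : b⁻¹ ≤ C * a⁻¹ := by
  have h1 : (C * b)⁻¹ ≤ a⁻¹ := ENNReal.inv_le_inv.2 h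
  have h2 : (C * b)⁻¹ = C⁻¹ * b⁻¹ := ENNReal.mul_inv (Or.inl hC0) (Or.inl hCt)
  calc b⁻¹ = C * C⁻¹ * b⁻¹ := by rw [ENNReal.mul_inv_cancel hC0 hCt, one_mul]
    _ = C * (C⁻¹ * b⁻¹) := by ring
    _ ≤ C * a⁻¹ := mul_le_mul_right (h2 ▸ h1) C

lemma doubling_pow {Z : Type*} [MetricSpace Z] [MeasurableSpace Z]
    (ν : Measure Z) (C_D : ℝ)
    (hdbl : ∀ (z : Z) (r : ℝ), 0 < r →
      ν (ball z (2 * r)) ≤ ENNReal.ofReal C_D * ν (ball z r) ∧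
        0 < ν (ball z r) ∧ ν (ball z r) < ⊤)
    (z : Z) (r : ℝ) (hr : 0 < r) (k : ℕ) :
    ν (ball z (2 ^ k * r)) ≤ ENNReal.ofReal C_D ^ k * ν (ball z r) := by
  induction k with
  | zero => simp
  | succ n ih =>
      have h2 : (0:ℝ) < 2 ^ n * r := by positivity
      have e : (2:ℝ) ^ (n+1) * r = 2 * (2 ^ n * r) := by ring
      rw [e]
      calc ν (ball z (2 * (2 ^ n * r))) ≤ ENNReal.ofReal C_D * ν (ball z (2 ^ n * r)) :=
            (hdbl z (2 ^ n * r) h2).1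
        _ ≤ ENNReal.ofReal C_D * (ENNReal.ofReal C_D ^ n * ν (ball z r)) :=
            mul_le_mul_right ih _
        _ = ENNReal.ofReal C_D ^ (n+1) * ν (ball z r) := by ring

lemma doubling_le {Z : Type*} [MetricSpace Z] [MeasurableSpace Z]
    (ν : Measure Z) (C_D : ℝ)
    (hdbl : ∀ (z : Z) (r : ℝ), 0 < r →
      ν (ball z (2 * r)) ≤ ENNReal.ofReal C_D * ν (ball z r) ∧
        0 < ν (ball z r) ∧ ν (ball z r) < ⊤)
    (z : Z) (r r' : ℝ) (hr : 0 < r) (k : ℕ) (h : r' ≤ 2 ^ k * r) :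
    ν (ball z r') ≤ ENNReal.ofReal C_D ^ k * ν (ball z r) :=
  le_trans (measure_mono (ball_subset_ball h)) (doubling_pow ν C_D hdbl z r hr k)

lemma sep_count {Z : Type*} [MetricSpace Z] [MeasurableSpace Z] [BorelSpace Z]
    (ν : Measure Z) (C_D : ℝ)
    (hdbl : ∀ (z : Z) (r : ℝ), 0 < r →
      ν (ball z (2 * r)) ≤ ENNReal.ofReal C_D * ν (ball z r) ∧
        0 < ν (ball z r) ∧ ν (ball z r) < ⊤)
    (z : Z) (L s : ℝ) (hs : 0 < s) (hL : 0 ≤ L) (k : ℕ) (hk : 2 * L + s ≤ 2 ^ k * s)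
    (T : Finset Z) (hT : ∀ x ∈ T, dist x z ≤ L)
    (hsep : (T : Set Z).Pairwise fun a b => 2 * s ≤ dist a b) :
    (T.card : ℝ≥0∞) ≤ ENNReal.ofReal C_D ^ k := by
  have hB0pos := (hdbl z (L + s) (by linarith)).2.1
  have hB0fin := (hdbl z (L + s) (by linarith)).2.2
  have hdisj : (T : Set Z).PairwiseDisjoint fun x => ball x s := by
    intro a ha b hb hab
    exact ball_disjoint_ball (by have := hsep ha hb hab; linarith)
  have hunion := measure_biUnion_finset (μ := ν) hdisj (fun b _ => measurableSet_ball)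
  have hper : ∀ x ∈ T, ν (ball z (L + s)) ≤ ENNReal.ofReal C_D ^ k * ν (ball x s) := by
    intro x hx
    have hsub : ball z (L + s) ⊆ ball x (2 ^ k * s) := by
      intro w hw
      rw [mem_ball] at hw ⊢
      have h1 : dist w x ≤ dist w z + dist z x := dist_triangle w z x
      have h2 : dist z x ≤ L := by rw [dist_comm]; exact hT x hx
      linarith
    exact le_trans (measure_mono hsub) (doubling_pow ν C_D hdbl x s hs k)
  have hsum : (T.card : ℝ≥0∞) * ν (ball z (L + s)) ≤
      ENNReal.ofReal C_D ^ k * ν (ball z (L + s)) := by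
    calc (T.card : ℝ≥0∞) * ν (ball z (L + s)) = ∑ _x ∈ T, ν (ball z (L + s)) := by
          rw [Finset.sum_const, nsmul_eq_mul]
      _ ≤ ∑ x ∈ T, ENNReal.ofReal C_D ^ k * ν (ball x s) := Finset.sum_le_sum hper
      _ = ENNReal.ofReal C_D ^ k * ∑ x ∈ T, ν (ball x s) := by rw [Finset.mul_sum]
      _ = ENNReal.ofReal C_D ^ k * ν (⋃ x ∈ T, ball x s) := by rw [hunion]
      _ ≤ ENNReal.ofReal C_D ^ k * ν (ball z (L + s)) := by
          apply mul_le_mul_right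
          apply measure_mono
          intro w hw
          simp only [mem_iUnion] at hw
          obtain ⟨x, hx, hw⟩ := hw
          rw [mem_ball] at hw ⊢
          have h1 : dist w z ≤ dist w x + dist x z := dist_triangle w x z
          have := hT x hx
          linarith
  exact (ENNReal.mul_le_mul_iff_left (ne_of_gt hB0pos) (ne_of_lt hB0fin)).1 hsum

lemma graph_coloring {ι : Type*} [DecidableEq ι] (M : ℕ) (G : ι → ι → Prop)
    [DecidableRel G] (hsym : Symmetric G) (s : Finset ι)
    (hdeg : ∀ i ∈ s, (s.filter fun j => G i j).card ≤ M) :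
    ∃ c : ι → Fin (M + 1), ∀ i ∈ s, ∀ j ∈ s, i ≠ j → G i j → c i ≠ c j := by
  revert hdeg
  induction s using Finset.induction_on with
  | empty => intro _; exact ⟨fun _ => 0, by simp⟩
  | @insert a s ha ih =>
    intro hdeg
    obtain ⟨c, hc⟩ := ih (fun i hi =>
      le_trans (Finset.card_le_card
        (Finset.filter_subset_filter _ (Finset.subset_insert a s)))
        (hdeg i (Finset.mem_insert_of_mem hi)))
    have hcard : ((s.filter fun j => G a j).image c).card < M + 1 := by
      have h1 : ((s.filter fun j => G a j).image c).card ≤ (s.filter fun j => G a j).card :=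
        Finset.card_image_le
      have h2 : (s.filter fun j => G a j).card ≤ ((insert a s).filter fun j => G a j).card :=
        Finset.card_le_card (Finset.filter_subset_filter _ (Finset.subset_insert a s))
      have h3 := hdeg a (Finset.mem_insert_self a s)
      omega
    have hex : ∃ k : Fin (M+1), k ∉ (s.filter fun j => G a j).image c := by
      by_contra h
      push_neg at h
      have hsub : (Finset.univ : Finset (Fin (M+1))) ⊆ (s.filter fun j => G a j).image c :=
        fun k _ => h k
      have := Finset.card_le_card hsub
      rw [Finset.card_univ, Fintype.card_fin] at this
      omega
    obtain ⟨k, hk⟩ := hex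
    refine ⟨Function.update c a k, ?_⟩
    intro i hi j hj hij hG
    rcases Finset.mem_insert.1 hi with rfl | hi' <;> rcases Finset.mem_insert.1 hj with rfl | hj'
    · exact absurd rfl hij
    · have hja : j ≠ i := fun h => ha (h ▸ hj')
      rw [Function.update_self, Function.update_of_ne hja]
      intro heq
      exact hk (heq ▸ Finset.mem_image_of_mem c (Finset.mem_filter.2 ⟨hj', hG⟩))
    · have hia : i ≠ j := fun h => ha (h ▸ hi')
      rw [Function.update_self, Function.update_of_ne hia]
      intro heq
      exact hk (heq.symm ▸ Finset.mem_image_of_mem c (Finset.mem_filter.2 ⟨hi', hsym hG⟩))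
    · have hia : i ≠ a := fun h => ha (h ▸ hi')
      have hja : j ≠ a := fun h => ha (h ▸ hj')
      rw [Function.update_of_ne hia, Function.update_of_ne hja]
      exact hc i hi' j hj' hij hG

lemma measurable_ofReal_rpow (c : ℝ) : Measurable fun t : ℝ => ENNReal.ofReal (t ^ c) := by
  measurability

lemma combine_aux (KA KL S1 S2 L A J : ℝ≥0∞) (hL : L ≤ J) (hA : A ≤ J) :
    L + (KA * A * S1 + KL * L * S2) ≤ (1 + KA * S1 + KL * S2) * J := by
  calc L + (KA * A * S1 + KL * L * S2)
      ≤ J + (KA * J * S1 + KL * J * S2) :=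
        add_le_add hL (add_le_add (mul_le_mul_left (mul_le_mul_right hA _) _)
          (mul_le_mul_left (mul_le_mul_right hL _) _))
    _ = (1 + KA * S1 + KL * S2) * J := by ring

lemma exists_max_sep {Z : Type*} [MetricSpace Z] (s : ℝ) (hs : 0 < s) :
    ∃ T : Set Z, (T.Pairwise fun a b => s ≤ dist a b) ∧ ∀ x : Z, ∃ z ∈ T, dist x z < s := by
  have hchain : ∀ c ⊆ {T : Set Z | T.Pairwise fun a b => s ≤ dist a b},
      IsChain (· ⊆ ·) c → ∃ ub ∈ {T : Set Z | T.Pairwise fun a b => s ≤ dist a b},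
        ∀ t ∈ c, t ⊆ ub := by
    intro c hcS hchain
    refine ⟨⋃₀ c, ?_, fun t ht => subset_sUnion_of_mem ht⟩
    intro a ha b hb hab
    obtain ⟨t₁, ht₁, ha₁⟩ := ha
    obtain ⟨t₂, ht₂, hb₂⟩ := hb
    rcases eq_or_ne t₁ t₂ with rfl | hne
    · exact hcS ht₁ ha₁ hb₂ hab
    · rcases hchain ht₁ ht₂ hne with hsub | hsub
      · exact hcS ht₂ (hsub ha₁) hb₂ hab
      · exact hcS ht₁ ha₁ (hsub hb₂) hab
  obtain ⟨T, hT⟩ := zorn_subset {T : Set Z | T.Pairwise fun a b => s ≤ dist a b} hchain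
  refine ⟨T, hT.prop, ?_⟩
  intro x
  by_contra h
  push_neg at h
  have hsep : ∀ z ∈ T, s ≤ dist x z := h
  have hx : x ∉ T := by
    intro hxT
    have := hsep x hxT
    simp only [dist_self] at this
    linarith
  have hins : insert x T ∈ {T : Set Z | T.Pairwise fun a b => s ≤ dist a b} := by
    intro a ha b hb hab
    rcases ha with rfl | haT
    · rcases hb with rfl | hbT
      · exact absurd rfl hab
      · exact hsep b hbT
    · rcases hb with rfl | hbT
      · rw [dist_comm]; exact hsep a haT
      · exact hT.prop haT hbT hab
  have h2 : insert x T ⊆ T := hT.2 hins (subset_insert x T)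
  exact hx (h2 (mem_insert x T))

end StmtSevenAux

/-- If `Z` is bounded, `0 ≤ θ < η ≤ 1` and `τ ≥ 1`, then
`A^η_{1,τ}(Z) ⊂ B^θ_{1,1}(Z)`: there is `C ≥ 1` (depending on the doubling constant,
`θ`, `η`, `τ`, `diam Z` and the norm parameters) with
`‖f‖_{B^θ_{1,1}(Z)} ≤ C ‖f‖_{A^η_{1,τ}(Z)}` for every `f ∈ L¹(Z,ν)`. -/
theorem stmt_7
    {Z : Type*} [MetricSpace Z] [MeasurableSpace Z] [BorelSpace Z]
    (ν : Measure Z) [ν.Regular]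
    (hZbdd : Bornology.IsBounded (Set.univ : Set Z))
    (C_D : ℝ) (hCD : 1 ≤ C_D)
    (hdbl : ∀ (z : Z) (r : ℝ), 0 < r →
      ν (ball z (2 * r)) ≤ ENNReal.ofReal C_D * ν (ball z r) ∧
        0 < ν (ball z r) ∧ ν (ball z r) < ⊤)
    (θ η : ℝ) (hθ0 : 0 ≤ θ) (hθη : θ < η) (hη1 : η ≤ 1)
    (τ : ℝ) (hτ : 1 ≤ τ) (R_B R_A : ℝ) (hRB : 0 < R_B) (hRA : 0 < R_A) :
    ∃ C : ℝ≥0∞, 1 ≤ C ∧ C < ⊤ ∧ ∀ f : Z → ℝ, Integrable f ν →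
      besovNorm ν f θ R_B ≤ C * jnNorm ν f η τ R_A := by
  classical
  rcases isEmpty_or_nonempty Z with hZ | hZ
  · refine ⟨1, le_refl 1, ENNReal.one_lt_top, fun f hf => ?_⟩
    have hν : ν = 0 := Measure.eq_zero_of_isEmpty ν
    have h1 : besovNorm ν f θ R_B = 0 := by
      simp [besovNorm, besovEnergy, hν]
    rw [h1]
    exact zero_le
  obtain ⟨z₀⟩ := hZ
  obtain ⟨D, hD⟩ := Metric.isBounded_iff.1 hZbdd
  have hD0 : 0 ≤ D := le_trans dist_nonneg (hD (mem_univ z₀) (mem_univ z₀))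
  have hCD0 : (0:ℝ) < C_D := lt_of_lt_of_le one_pos hCD
  set CD : ℝ≥0∞ := ENNReal.ofReal C_D with hCDdef
  have hCDne0 : CD ≠ 0 := by
    simp only [hCDdef, ne_eq, ENNReal.ofReal_eq_zero, not_le]
    exact hCD0
  have hCDnet : CD ≠ ⊤ := ENNReal.ofReal_ne_top
  have hτ0 : 0 < τ := lt_of_lt_of_le one_pos hτ
  set t₀ : ℝ := min R_B (R_A / (3 * τ)) with ht₀def
  have ht₀pos : 0 < t₀ := lt_min hRB (by positivity)
  have ht₀RB : t₀ ≤ R_B := min_le_left _ _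
  have ht₀RA : t₀ ≤ R_A / (3 * τ) := min_le_right _ _
  set kτ : ℕ := ⌈τ⌉₊ with hkτdef
  have hτ2 : τ ≤ 2 ^ kτ := by
    have h1 : (kτ : ℝ) ≤ 2 ^ kτ := by exact_mod_cast (Nat.lt_two_pow_self (n := kτ)).le
    exact (Nat.le_ceil τ).trans h1
  set M : ℕ := ⌈C_D ^ 4⌉₊ with hMdef
  obtain ⟨m, hm⟩ := pow_unbounded_of_one_lt ((D + 1) / t₀) (by norm_num : (1:ℝ) < 2)
  have hm' : D + 1 ≤ 2 ^ m * t₀ := ((div_lt_iff₀ ht₀pos).1 hm).le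
  set K_A : ℝ≥0∞ := (CD ^ (3 + kτ) + 1) * (((M : ℝ≥0∞) + 1) * ENNReal.ofReal 3) with hKAdef
  set K_L : ℝ≥0∞ := CD ^ m + 1 with hKLdef
  set S1 : ℝ≥0∞ := ∫⁻ t in Ioo (0:ℝ) t₀, ENNReal.ofReal (t ^ (η - (1 + θ))) with hS1def
  have hS1top : S1 < ⊤ := by
    have hint : IntegrableOn (fun t : ℝ => t ^ (η - (1 + θ))) (Ioo 0 t₀) volume := by
      have h1 : IntervalIntegrable (fun t : ℝ => t ^ (η - (1 + θ))) volume 0 t₀ :=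
        intervalIntegral.intervalIntegrable_rpow' (by linarith)
      exact ((intervalIntegrable_iff_integrableOn_Ioc_of_le ht₀pos.le).1 h1).mono_set
        Ioo_subset_Ioc_self
    have hnn : 0 ≤ᵐ[volume.restrict (Ioo (0:ℝ) t₀)] fun t => t ^ (η - (1 + θ)) := by
      filter_upwards [ae_restrict_mem measurableSet_Ioo] with t ht
      exact Real.rpow_nonneg ht.1.le _
    rw [hS1def, ← ofReal_integral_eq_lintegral_ofReal hint hnn]
    exact ENNReal.ofReal_lt_top
  set S2 : ℝ≥0∞ := ENNReal.ofReal (t₀ ^ (-(1 + θ))) * ENNReal.ofReal (R_B - t₀) with hS2def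
  have hCDpowne : ∀ n : ℕ, CD ^ n ≠ ⊤ := fun n => ENNReal.pow_ne_top hCDnet
  have hKAne : K_A ≠ ⊤ := by
    rw [hKAdef]
    exact ENNReal.mul_ne_top
      (ENNReal.add_ne_top.2 ⟨hCDpowne _, ENNReal.one_ne_top⟩)
      (ENNReal.mul_ne_top (ENNReal.add_ne_top.2 ⟨ENNReal.natCast_ne_top M, ENNReal.one_ne_top⟩)
        ENNReal.ofReal_ne_top)
  have hKLne : K_L ≠ ⊤ := by
    rw [hKLdef]
    exact ENNReal.add_ne_top.2 ⟨hCDpowne m, ENNReal.one_ne_top⟩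
  set C : ℝ≥0∞ := 1 + K_A * S1 + K_L * S2 with hCdef
  have hC1 : 1 ≤ C := by
    rw [hCdef]
    calc (1:ℝ≥0∞) ≤ 1 + K_A * S1 := le_self_add
      _ ≤ 1 + K_A * S1 + K_L * S2 := le_self_add
  have hCt : C < ⊤ := by
    rw [hCdef]
    have h1 : K_A * S1 ≠ ⊤ := ENNReal.mul_ne_top hKAne hS1top.ne
    have h2 : K_L * S2 ≠ ⊤ := ENNReal.mul_ne_top hKLne
      (by rw [hS2def]; exact ENNReal.mul_ne_top ENNReal.ofReal_ne_top ENNReal.ofReal_ne_top)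
    exact lt_top_iff_ne_top.2
      (ENNReal.add_ne_top.2 ⟨ENNReal.add_ne_top.2 ⟨ENNReal.one_ne_top, h1⟩, h2⟩)
  refine ⟨C, hC1, hCt, ?_⟩
  intro f hf
  set L1f : ℝ≥0∞ := ∫⁻ z, ENNReal.ofReal |f z| ∂ν with hL1fdef
  set Asup : ℝ≥0∞ := ⨆ (𝓑 : Set (Z × ℝ)) (_ : jnAdmissible τ R_A 𝓑),
      ∑' b : 𝓑, ENNReal.ofReal ((b : Z × ℝ).2 ^ (-η)) *
        ∫⁻ y in ball (b : Z × ℝ).1 (τ * (b : Z × ℝ).2),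
          ENNReal.ofReal |f y - ⨍ w in ball (b : Z × ℝ).1 (τ * (b : Z × ℝ).2), f w ∂ν| ∂ν
    with hAsupdef
  have hjn : jnNorm ν f η τ R_A = L1f + Asup := rfl
  have hL1le : L1f ≤ jnNorm ν f η τ R_A := by rw [hjn]; exact le_self_add
  have hAle : Asup ≤ jnNorm ν f η τ R_A := by rw [hjn]; exact le_add_self
  set E : ℝ → ℝ≥0∞ := fun t =>
    ∫⁻ x, (ν (ball x t))⁻¹ * ∫⁻ y in ball x t, ENNReal.ofReal |f y - f x| ∂ν ∂ν with hEdef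
  have hBE : besovEnergy ν f θ R_B =
      ∫⁻ t in Ioo (0:ℝ) R_B, E t * ENNReal.ofReal (t ^ (-(1 + θ))) := rfl
  -- Small-scale estimate
  have key : ∀ t ∈ Ioo (0:ℝ) t₀, E t ≤ K_A * ENNReal.ofReal (t ^ η) * Asup := by
    intro t ht
    obtain ⟨ht0, htt₀⟩ := ht
    set s : ℝ := τ * t with hsdef
    have hs : 0 < s := by rw [hsdef]; positivity
    have hts : t ≤ s := by rw [hsdef]; nlinarith
    obtain ⟨T₀, hT₀sep, hT₀cov⟩ := exists_max_sep (Z := Z) (2 * s) (by linarith)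
    have hT₀D : ∀ x ∈ T₀, dist x z₀ ≤ D := fun x _ => hD (mem_univ x) (mem_univ z₀)
    obtain ⟨k₀, hk₀⟩ := pow_unbounded_of_one_lt ((2 * D + s) / s) (by norm_num : (1:ℝ) < 2)
    have hk₀' : 2 * D + s ≤ 2 ^ k₀ * s := ((div_lt_iff₀ hs).1 hk₀).le
    have hT₀fin : T₀.Finite := by
      by_contra hinf
      have hinf' : T₀.Infinite := hinf
      obtain ⟨T, hTsub, hTcard⟩ := hinf'.exists_subset_card_eq (⌈C_D ^ k₀⌉₊ + 1)
      have hb := sep_count ν C_D hdbl z₀ D s hs hD0 k₀ hk₀' T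
        (fun x hx => hT₀D x (hTsub hx)) (hT₀sep.mono hTsub)
      rw [hTcard] at hb
      have h1 : CD ^ k₀ = ENNReal.ofReal (C_D ^ k₀) := by
        rw [hCDdef, ← ENNReal.ofReal_pow hCD0.le]
      have h2 : ENNReal.ofReal (C_D ^ k₀) ≤ ((⌈C_D ^ k₀⌉₊ : ℕ) : ℝ≥0∞) := by
        rw [← ENNReal.ofReal_natCast]
        exact ENNReal.ofReal_le_ofReal (Nat.le_ceil _)
      have h3 : ((⌈C_D ^ k₀⌉₊ + 1 : ℕ) : ℝ≥0∞) ≤ ((⌈C_D ^ k₀⌉₊ : ℕ) : ℝ≥0∞) :=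
        (hb.trans h1.le).trans h2
      have h4 : (⌈C_D ^ k₀⌉₊ + 1 : ℕ) ≤ (⌈C_D ^ k₀⌉₊ : ℕ) := by exact_mod_cast h3
      omega
    set Tf : Finset Z := hT₀fin.toFinset with hTfdef
    have hTfmem : ∀ {x : Z}, x ∈ Tf ↔ x ∈ T₀ := fun {x} => hT₀fin.mem_toFinset
    have hTfsep : (Tf : Set Z).Pairwise fun a b => 2 * s ≤ dist a b := by
      rw [hTfdef, Set.Finite.coe_toFinset]
      exact hT₀sep
    set cav : Z → ℝ := fun i => ⨍ w in ball i (3 * s), f w ∂ν with hcavdef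
    set Osc : Z → ℝ≥0∞ := fun i =>
      ∫⁻ y in ball i (3 * s), ENNReal.ofReal |f y - cav i| ∂ν with hOscdef
    have hcov : (⋃ i : Tf, ball (i : Z) (2 * s)) = univ := by
      apply eq_univ_of_forall
      intro x
      obtain ⟨z, hzT, hz⟩ := hT₀cov x
      exact mem_iUnion.2 ⟨⟨z, hTfmem.2 hzT⟩, mem_ball.2 hz⟩
    have hptw : ∀ i ∈ Tf, ∀ x ∈ ball i (2 * s),
        (ν (ball x t))⁻¹ * ∫⁻ y in ball x t, ENNReal.ofReal |f y - f x| ∂ν ≤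
          CD ^ (3 + kτ) * (ν (ball i (3 * s)))⁻¹ * Osc i + ENNReal.ofReal |f x - cav i| := by
      intro i hi x hx
      rw [mem_ball] at hx
      have hbsub : ball x t ⊆ ball i (3 * s) := by
        intro y hy
        rw [mem_ball] at hy ⊢
        have := dist_triangle y x i
        linarith
      have hBsub2 : ball i (3 * s) ⊆ ball x (2 ^ (3 + kτ) * t) := by
        intro y hy
        rw [mem_ball] at hy ⊢
        have h5 : dist y x ≤ dist y i + dist i x := dist_triangle y i x
        have h6 : dist i x < 2 * s := by rw [dist_comm]; exact hx
        have h8 : 5 * s ≤ 2 ^ (3 + kτ) * t := by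
          have e : (2:ℝ) ^ (3 + kτ) = 8 * 2 ^ kτ := by rw [pow_add]; norm_num
          rw [e, hsdef]
          have hA : τ * t ≤ 2 ^ kτ * t := mul_le_mul_of_nonneg_right hτ2 ht0.le
          have hB : (0:ℝ) ≤ 2 ^ kτ * t := by positivity
          linarith
        linarith
      have hdoub : ν (ball i (3 * s)) ≤ CD ^ (3 + kτ) * ν (ball x t) := by
        rw [hCDdef]
        exact le_trans (measure_mono hBsub2) (doubling_pow ν C_D hdbl x t ht0 (3 + kτ))
      have hinv : (ν (ball x t))⁻¹ ≤ CD ^ (3 + kτ) * (ν (ball i (3 * s)))⁻¹ :=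
        ennreal_inv_le_of_le_mul (pow_ne_zero _ hCDne0) (hCDpowne _) hdoub
      have hy : ∫⁻ y in ball x t, ENNReal.ofReal |f y - f x| ∂ν ≤
          ENNReal.ofReal |f x - cav i| * ν (ball x t) + Osc i := by
        calc ∫⁻ y in ball x t, ENNReal.ofReal |f y - f x| ∂ν
            ≤ ∫⁻ y in ball x t,
                (ENNReal.ofReal |f x - cav i| + ENNReal.ofReal |f y - cav i|) ∂ν := by
              apply lintegral_mono
              intro y
              show ENNReal.ofReal |f y - f x| ≤
                ENNReal.ofReal |f x - cav i| + ENNReal.ofReal |f y - cav i|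
              rw [← ENNReal.ofReal_add (abs_nonneg _) (abs_nonneg _)]
              apply ENNReal.ofReal_le_ofReal
              calc |f y - f x| ≤ |f y - cav i| + |cav i - f x| := abs_sub_le _ _ _
                _ = |f x - cav i| + |f y - cav i| := by
                    rw [abs_sub_comm (cav i) (f x)]; ring
          _ = ENNReal.ofReal |f x - cav i| * ν (ball x t) +
              ∫⁻ y in ball x t, ENNReal.ofReal |f y - cav i| ∂ν := by
              rw [lintegral_add_left measurable_const, setLIntegral_const]
          _ ≤ ENNReal.ofReal |f x - cav i| * ν (ball x t) + Osc i := by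
              apply add_le_add_right
              simp only [hOscdef]
              exact lintegral_mono_set hbsub
      calc (ν (ball x t))⁻¹ * ∫⁻ y in ball x t, ENNReal.ofReal |f y - f x| ∂ν
          ≤ (ν (ball x t))⁻¹ * (ENNReal.ofReal |f x - cav i| * ν (ball x t) + Osc i) :=
            mul_le_mul_right hy _
        _ = (ν (ball x t))⁻¹ * (ENNReal.ofReal |f x - cav i| * ν (ball x t)) +
            (ν (ball x t))⁻¹ * Osc i := mul_add _ _ _
        _ ≤ ENNReal.ofReal |f x - cav i| + CD ^ (3 + kτ) * (ν (ball i (3 * s)))⁻¹ * Osc i :=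
            add_le_add (ennreal_inv_mul_cancel_le _ _) (mul_le_mul_left hinv _)
        _ = CD ^ (3 + kτ) * (ν (ball i (3 * s)))⁻¹ * Osc i + ENNReal.ofReal |f x - cav i| :=
            add_comm _ _
    have hE3 : ∀ i : Tf, (∫⁻ x in ball (i : Z) (2 * s),
        (ν (ball x t))⁻¹ * ∫⁻ y in ball x t, ENNReal.ofReal |f y - f x| ∂ν ∂ν) ≤
        (CD ^ (3 + kτ) + 1) * Osc (i : Z) := by
      intro i
      have h2s3s : ν (ball (i : Z) (2 * s)) ≤ ν (ball (i : Z) (3 * s)) :=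
        measure_mono (ball_subset_ball (by linarith))
      calc ∫⁻ x in ball (i : Z) (2 * s),
            (ν (ball x t))⁻¹ * ∫⁻ y in ball x t, ENNReal.ofReal |f y - f x| ∂ν ∂ν
          ≤ ∫⁻ x in ball (i : Z) (2 * s),
              (CD ^ (3 + kτ) * (ν (ball (i : Z) (3 * s)))⁻¹ * Osc (i : Z) +
                ENNReal.ofReal |f x - cav (i : Z)|) ∂ν :=
            setLIntegral_mono' measurableSet_ball (hptw (i : Z) i.2)
        _ = CD ^ (3 + kτ) * (ν (ball (i : Z) (3 * s)))⁻¹ * Osc (i : Z) * ν (ball (i : Z) (2 * s)) +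
            ∫⁻ x in ball (i : Z) (2 * s), ENNReal.ofReal |f x - cav (i : Z)| ∂ν := by
            rw [lintegral_add_left measurable_const, setLIntegral_const]
        _ ≤ CD ^ (3 + kτ) * Osc (i : Z) + Osc (i : Z) := by
            apply add_le_add
            · calc CD ^ (3 + kτ) * (ν (ball (i : Z) (3 * s)))⁻¹ * Osc (i : Z) *
                    ν (ball (i : Z) (2 * s))
                  ≤ CD ^ (3 + kτ) * (ν (ball (i : Z) (3 * s)))⁻¹ * Osc (i : Z) *
                    ν (ball (i : Z) (3 * s)) := mul_le_mul_right h2s3s _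
                _ = CD ^ (3 + kτ) *
                    ((ν (ball (i : Z) (3 * s)))⁻¹ * (Osc (i : Z) * ν (ball (i : Z) (3 * s)))) := by
                    ring
                _ ≤ CD ^ (3 + kτ) * Osc (i : Z) :=
                    mul_le_mul_right (ennreal_inv_mul_cancel_le _ _) _
            · simp only [hOscdef]
              exact lintegral_mono_set (ball_subset_ball (by linarith))
        _ = (CD ^ (3 + kτ) + 1) * Osc (i : Z) := by ring
    have stepA : E t ≤ (CD ^ (3 + kτ) + 1) * ∑ i ∈ Tf, Osc i := by
      calc E t = ∫⁻ x in ⋃ i : Tf, ball (i : Z) (2 * s),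
            (ν (ball x t))⁻¹ * ∫⁻ y in ball x t, ENNReal.ofReal |f y - f x| ∂ν ∂ν := by
            simp only [hEdef]
            rw [hcov, setLIntegral_univ]
        _ ≤ ∑' i : Tf, ∫⁻ x in ball (i : Z) (2 * s),
            (ν (ball x t))⁻¹ * ∫⁻ y in ball x t, ENNReal.ofReal |f y - f x| ∂ν ∂ν :=
            lintegral_iUnion_le _ _
        _ ≤ ∑' i : Tf, (CD ^ (3 + kτ) + 1) * Osc (i : Z) := ENNReal.tsum_le_tsum hE3
        _ = ∑ i ∈ Tf, (CD ^ (3 + kτ) + 1) * Osc i :=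
            Finset.tsum_subtype Tf (fun b => (CD ^ (3 + kτ) + 1) * Osc b)
        _ = (CD ^ (3 + kτ) + 1) * ∑ i ∈ Tf, Osc i := by rw [Finset.mul_sum]
    -- Step B : color and sum over admissible families
    have ht3RA : 3 * t ≤ R_A / τ := by
      have h1 : t ≤ R_A / (3 * τ) := le_trans htt₀.le ht₀RA
      have h3 : 3 * (R_A / (3 * τ)) = R_A / τ := by
        field_simp
        try ring
      linarith
    have hτρ : τ * (3 * t) = 3 * s := by rw [hsdef]; ring
    set G : Z → Z → Prop := fun i j => dist i j < 6 * s with hGdef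
    have hGsym : Symmetric G := by
      intro a b h
      simp only [hGdef] at h ⊢
      rwa [dist_comm]
    have hdeg : ∀ i ∈ Tf, (Tf.filter fun j => G i j).card ≤ M := by
      intro i hi
      have hb := sep_count ν C_D hdbl i (6 * s) s hs (by linarith) 4
        (by norm_num; linarith) (Tf.filter fun j => G i j)
        (fun x hx => by
          have h1 : dist i x < 6 * s := by
            have := (Finset.mem_filter.1 hx).2
            simpa only [hGdef] using this
          rw [dist_comm] at h1
          exact h1.le)
        (hTfsep.mono (Finset.coe_subset.2 (Finset.filter_subset _ _)))
      have h1 : CD ^ 4 = ENNReal.ofReal (C_D ^ 4) := by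
        rw [hCDdef, ← ENNReal.ofReal_pow hCD0.le]
      have h2 : ENNReal.ofReal (C_D ^ 4) ≤ ((M : ℕ) : ℝ≥0∞) := by
        rw [hMdef, ← ENNReal.ofReal_natCast]
        exact ENNReal.ofReal_le_ofReal (Nat.le_ceil _)
      have h3 := (hb.trans h1.le).trans h2
      exact_mod_cast h3
    obtain ⟨col, hcol⟩ := graph_coloring M G hGsym Tf hdeg
    have hclass : ∀ k : Fin (M + 1),
        ∑ i ∈ Tf.filter (fun i => col i = k), Osc i ≤ ENNReal.ofReal ((3 * t) ^ η) * Asup := by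
      intro k
      set Bk : Finset (Z × ℝ) := (Tf.filter fun i => col i = k).image (fun i => (i, 3 * t))
        with hBkdef
      have hadm : jnAdmissible τ R_A (↑Bk : Set (Z × ℝ)) := by
        refine ⟨Bk.countable_toSet, ?_, ?_⟩
        · intro b hb
          rw [Finset.mem_coe, hBkdef, Finset.mem_image] at hb
          obtain ⟨i, hi, rfl⟩ := hb
          exact ⟨by show (0:ℝ) < 3 * t; linarith, ht3RA⟩
        · intro b₁ hb₁ b₂ hb₂ hne
          rw [Finset.mem_coe, hBkdef, Finset.mem_image] at hb₁ hb₂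
          obtain ⟨i, hi, rfl⟩ := hb₁
          obtain ⟨j, hj, rfl⟩ := hb₂
          have hij : i ≠ j := fun h => hne (by rw [h])
          have hnG : ¬ G i j := by
            intro hGij
            exact hcol i (Finset.mem_of_mem_filter i hi) j (Finset.mem_of_mem_filter j hj)
              hij hGij
              (by rw [(Finset.mem_filter.1 hi).2, (Finset.mem_filter.1 hj).2])
          have hdist : 6 * s ≤ dist i j := by
            simp only [hGdef] at hnG
            exact not_lt.1 hnG
          show Disjoint (ball i (τ * (3 * t))) (ball j (τ * (3 * t)))
          rw [hτρ]
          exact ball_disjoint_ball (by linarith)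
      set Fb : Z × ℝ → ℝ≥0∞ := fun b => ENNReal.ofReal (b.2 ^ (-η)) *
          ∫⁻ y in ball b.1 (τ * b.2),
            ENNReal.ofReal |f y - ⨍ w in ball b.1 (τ * b.2), f w ∂ν| ∂ν with hFbdef
      have hsum : (∑' b : (↑Bk : Set (Z × ℝ)), Fb ↑b) ≤ Asup := by
        rw [hAsupdef]
        exact le_iSup₂_of_le (↑Bk : Set (Z × ℝ)) hadm le_rfl
      have hconv : (∑' b : (↑Bk : Set (Z × ℝ)), Fb ↑b) =
          ∑ i ∈ Tf.filter (fun i => col i = k), ENNReal.ofReal ((3 * t) ^ (-η)) * Osc i := by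
        rw [Finset.tsum_subtype' Bk Fb]
        rw [hBkdef, Finset.sum_image (fun x _ y _ h => (Prod.ext_iff.1 h).1)]
        apply Finset.sum_congr rfl
        intro i hi
        simp only [hFbdef]
        show ENNReal.ofReal ((3 * t) ^ (-η)) *
            ∫⁻ y in ball i (τ * (3 * t)),
              ENNReal.ofReal |f y - ⨍ w in ball i (τ * (3 * t)), f w ∂ν| ∂ν = _
        rw [hτρ]
        try simp only [hOscdef, hcavdef]
      have hmul1 : ENNReal.ofReal ((3 * t) ^ η) * ENNReal.ofReal ((3 * t) ^ (-η)) = 1 := by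
        rw [← ENNReal.ofReal_mul (Real.rpow_nonneg (by positivity) _)]
        rw [← Real.rpow_add (by positivity : (0:ℝ) < 3 * t)]
        rw [add_neg_cancel, Real.rpow_zero, ENNReal.ofReal_one]
      calc ∑ i ∈ Tf.filter (fun i => col i = k), Osc i
          = ENNReal.ofReal ((3 * t) ^ η) * (ENNReal.ofReal ((3 * t) ^ (-η)) *
              ∑ i ∈ Tf.filter (fun i => col i = k), Osc i) := by
            rw [← mul_assoc, hmul1, one_mul]
        _ = ENNReal.ofReal ((3 * t) ^ η) * ∑ i ∈ Tf.filter (fun i => col i = k),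
              ENNReal.ofReal ((3 * t) ^ (-η)) * Osc i := by rw [Finset.mul_sum]
        _ ≤ ENNReal.ofReal ((3 * t) ^ η) * Asup := by
            apply mul_le_mul_right
            rw [← hconv]
            exact hsum
    have stepB : ∑ i ∈ Tf, Osc i ≤
        ((M : ℝ≥0∞) + 1) * (ENNReal.ofReal ((3 * t) ^ η) * Asup) := by
      calc ∑ i ∈ Tf, Osc i
          = ∑ k : Fin (M + 1), ∑ i ∈ Tf.filter (fun i => col i = k), Osc i :=
            (Finset.sum_fiberwise Tf col Osc).symm
        _ ≤ ∑ _k : Fin (M + 1), ENNReal.ofReal ((3 * t) ^ η) * Asup :=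
            Finset.sum_le_sum (fun k _ => hclass k)
        _ = ((M : ℝ≥0∞) + 1) * (ENNReal.ofReal ((3 * t) ^ η) * Asup) := by
            rw [Finset.sum_const, Finset.card_univ, Fintype.card_fin, nsmul_eq_mul]
            push_cast
            ring
    have h3η : ENNReal.ofReal ((3 * t) ^ η) ≤ ENNReal.ofReal 3 * ENNReal.ofReal (t ^ η) := by
      rw [← ENNReal.ofReal_mul (by norm_num)]
      apply ENNReal.ofReal_le_ofReal
      rw [Real.mul_rpow (by norm_num) ht0.le]
      have h31 : (3:ℝ) ^ η ≤ 3 := by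
        calc (3:ℝ) ^ η ≤ (3:ℝ) ^ (1:ℝ) := Real.rpow_le_rpow_of_exponent_le (by norm_num) hη1
          _ = 3 := Real.rpow_one 3
      have htη : (0:ℝ) ≤ t ^ η := Real.rpow_nonneg ht0.le η
      nlinarith
    calc E t ≤ (CD ^ (3 + kτ) + 1) * ∑ i ∈ Tf, Osc i := stepA
      _ ≤ (CD ^ (3 + kτ) + 1) * (((M : ℝ≥0∞) + 1) * (ENNReal.ofReal ((3 * t) ^ η) * Asup)) :=
          mul_le_mul_right stepB _
      _ ≤ (CD ^ (3 + kτ) + 1) *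
          (((M : ℝ≥0∞) + 1) * ((ENNReal.ofReal 3 * ENNReal.ofReal (t ^ η)) * Asup)) := by
          apply mul_le_mul_right
          apply mul_le_mul_right
          exact mul_le_mul_left h3η _
      _ = K_A * ENNReal.ofReal (t ^ η) * Asup := by rw [hKAdef]; ring
  -- Large-scale estimate
  have keyL : ∀ t ∈ Ico t₀ R_B, E t ≤ K_L * L1f := by
    intro t ht
    have htpos : 0 < t := lt_of_lt_of_le ht₀pos ht.1
    have hpt : ∀ x : Z, (ν (ball x t))⁻¹ * ∫⁻ y in ball x t, ENNReal.ofReal |f y - f x| ∂ν ≤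
        CD ^ m * (ν univ)⁻¹ * L1f + ENNReal.ofReal |f x| := by
      intro x
      have hb : ν univ ≤ CD ^ m * ν (ball x t) := by
        have h1 : (univ : Set Z) ⊆ ball x (D + 1) := fun y _ => by
          rw [mem_ball]
          have := hD (mem_univ y) (mem_univ x)
          linarith
        have h2 : D + 1 ≤ 2 ^ m * t :=
          hm'.trans (mul_le_mul_of_nonneg_left ht.1 (by positivity))
        rw [hCDdef]
        exact le_trans (measure_mono h1) (doubling_le ν C_D hdbl x t (D + 1) htpos m h2)
      have hinv : (ν (ball x t))⁻¹ ≤ CD ^ m * (ν univ)⁻¹ :=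
        ennreal_inv_le_of_le_mul (pow_ne_zero _ hCDne0) (hCDpowne m) hb
      have hy : ∫⁻ y in ball x t, ENNReal.ofReal |f y - f x| ∂ν ≤
          ENNReal.ofReal |f x| * ν (ball x t) + L1f := by
        calc ∫⁻ y in ball x t, ENNReal.ofReal |f y - f x| ∂ν
            ≤ ∫⁻ y in ball x t, (ENNReal.ofReal |f x| + ENNReal.ofReal |f y|) ∂ν := by
              apply lintegral_mono
              intro y
              show ENNReal.ofReal |f y - f x| ≤ ENNReal.ofReal |f x| + ENNReal.ofReal |f y|
              rw [← ENNReal.ofReal_add (abs_nonneg _) (abs_nonneg _)]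
              apply ENNReal.ofReal_le_ofReal
              calc |f y - f x| ≤ |f y| + |f x| := abs_sub _ _
                _ = |f x| + |f y| := add_comm _ _
          _ = ENNReal.ofReal |f x| * ν (ball x t) +
              ∫⁻ y in ball x t, ENNReal.ofReal |f y| ∂ν := by
              rw [lintegral_add_left measurable_const, setLIntegral_const]
          _ ≤ ENNReal.ofReal |f x| * ν (ball x t) + L1f := by
              apply add_le_add_right
              calc ∫⁻ y in ball x t, ENNReal.ofReal |f y| ∂ν
                  ≤ ∫⁻ y in univ, ENNReal.ofReal |f y| ∂ν :=
                    lintegral_mono_set (subset_univ _)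
                _ = L1f := by rw [setLIntegral_univ]; try rw [hL1fdef]
      calc (ν (ball x t))⁻¹ * ∫⁻ y in ball x t, ENNReal.ofReal |f y - f x| ∂ν
          ≤ (ν (ball x t))⁻¹ * (ENNReal.ofReal |f x| * ν (ball x t) + L1f) :=
            mul_le_mul_right hy _
        _ = (ν (ball x t))⁻¹ * (ENNReal.ofReal |f x| * ν (ball x t)) +
            (ν (ball x t))⁻¹ * L1f := mul_add _ _ _
        _ ≤ ENNReal.ofReal |f x| + CD ^ m * (ν univ)⁻¹ * L1f :=
            add_le_add (ennreal_inv_mul_cancel_le _ _) (mul_le_mul_left hinv _)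
        _ = CD ^ m * (ν univ)⁻¹ * L1f + ENNReal.ofReal |f x| := add_comm _ _
    calc E t ≤ ∫⁻ x, (CD ^ m * (ν univ)⁻¹ * L1f + ENNReal.ofReal |f x|) ∂ν := by
          simp only [hEdef]
          exact lintegral_mono hpt
      _ = CD ^ m * (ν univ)⁻¹ * L1f * ν univ + L1f := by
          rw [lintegral_add_left measurable_const, lintegral_const]
          try rw [hL1fdef]
      _ ≤ CD ^ m * L1f + L1f := by
          apply add_le_add_left
          calc CD ^ m * (ν univ)⁻¹ * L1f * ν univ
              = CD ^ m * ((ν univ)⁻¹ * (L1f * ν univ)) := by ring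
            _ ≤ CD ^ m * L1f := mul_le_mul_right (ennreal_inv_mul_cancel_le _ _) _
      _ = K_L * L1f := by rw [hKLdef]; ring
  -- Assemble
  have hsplit : besovEnergy ν f θ R_B ≤
      (∫⁻ t in Ioo (0:ℝ) t₀, E t * ENNReal.ofReal (t ^ (-(1 + θ)))) +
      ∫⁻ t in Ico t₀ R_B, E t * ENNReal.ofReal (t ^ (-(1 + θ))) := by
    rw [hBE]
    calc ∫⁻ t in Ioo (0:ℝ) R_B, E t * ENNReal.ofReal (t ^ (-(1 + θ)))
        ≤ ∫⁻ t in Ioo (0:ℝ) t₀ ∪ Ico t₀ R_B, E t * ENNReal.ofReal (t ^ (-(1 + θ))) := by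
          apply lintegral_mono_set
          intro u hu
          rcases lt_or_ge u t₀ with h | h
          · exact Or.inl ⟨hu.1, h⟩
          · exact Or.inr ⟨h, hu.2⟩
      _ ≤ _ := lintegral_union_le _ _ _
  have hsmall : (∫⁻ t in Ioo (0:ℝ) t₀, E t * ENNReal.ofReal (t ^ (-(1 + θ)))) ≤
      K_A * Asup * S1 := by
    have hptw2 : ∀ t ∈ Ioo (0:ℝ) t₀, E t * ENNReal.ofReal (t ^ (-(1 + θ))) ≤
        K_A * Asup * ENNReal.ofReal (t ^ (η - (1 + θ))) := by
      intro t ht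
      calc E t * ENNReal.ofReal (t ^ (-(1 + θ)))
          ≤ K_A * ENNReal.ofReal (t ^ η) * Asup * ENNReal.ofReal (t ^ (-(1 + θ))) :=
            mul_le_mul_left (key t ht) _
        _ = K_A * Asup * (ENNReal.ofReal (t ^ η) * ENNReal.ofReal (t ^ (-(1 + θ)))) := by ring
        _ = K_A * Asup * ENNReal.ofReal (t ^ (η - (1 + θ))) := by
            have he : η - (1 + θ) = η + -(1 + θ) := by ring
            rw [he, Real.rpow_add ht.1, ENNReal.ofReal_mul (Real.rpow_nonneg ht.1.le _)]
    calc (∫⁻ t in Ioo (0:ℝ) t₀, E t * ENNReal.ofReal (t ^ (-(1 + θ))))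
        ≤ ∫⁻ t in Ioo (0:ℝ) t₀, K_A * Asup * ENNReal.ofReal (t ^ (η - (1 + θ))) :=
          setLIntegral_mono' measurableSet_Ioo hptw2
      _ = K_A * Asup * S1 := by
          rw [hS1def]
          exact lintegral_const_mul _ (measurable_ofReal_rpow _)
  have hlarge : (∫⁻ t in Ico t₀ R_B, E t * ENNReal.ofReal (t ^ (-(1 + θ)))) ≤
      K_L * L1f * S2 := by
    have hptw3 : ∀ t ∈ Ico t₀ R_B, E t * ENNReal.ofReal (t ^ (-(1 + θ))) ≤
        K_L * L1f * ENNReal.ofReal (t₀ ^ (-(1 + θ))) := by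
      intro t ht
      apply mul_le_mul' (keyL t ht)
      apply ENNReal.ofReal_le_ofReal
      exact Real.rpow_le_rpow_of_nonpos ht₀pos ht.1 (by linarith)
    calc (∫⁻ t in Ico t₀ R_B, E t * ENNReal.ofReal (t ^ (-(1 + θ))))
        ≤ ∫⁻ t in Ico t₀ R_B, K_L * L1f * ENNReal.ofReal (t₀ ^ (-(1 + θ))) ∂volume :=
          setLIntegral_mono' measurableSet_Ico hptw3
      _ = K_L * L1f * ENNReal.ofReal (t₀ ^ (-(1 + θ))) * volume (Ico t₀ R_B) :=
          setLIntegral_const _ _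
      _ = K_L * L1f * S2 := by rw [Real.volume_Ico, hS2def]; ring
  have hBesov : besovNorm ν f θ R_B = L1f + besovEnergy ν f θ R_B := rfl
  calc besovNorm ν f θ R_B = L1f + besovEnergy ν f θ R_B := hBesov
    _ ≤ L1f + (K_A * Asup * S1 + K_L * L1f * S2) :=
        add_le_add_right (hsplit.trans (add_le_add hsmall hlarge)) _
    _ ≤ (1 + K_A * S1 + K_L * S2) * jnNorm ν f η τ R_A :=
        combine_aux _ _ _ _ _ _ _ hL1le hAle
    _ = C * jnNorm ν f η τ R_A := by rw [hCdef]
end
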